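/- Let K be a totally real number field of degree d over Q with ring of integers O. There exists a constant D > 0, depending only on K, such that for every totally positive element h of K there exists a nonzero z in O with Tr_{K/Q}(h z^2) ≤ D · N_{K/Q}(h)^{1/d}. -/

import Mathlib

open NumberField Module
open scoped NNReal ENNReal

/-- Let K be a totally real number field of degree d over ℚ with ring of integers O.
There exists a constant D > 0, depending only on K, such that for every totally positive
element h of K there exists a nonzero z in O with Tr(h z²) ≤ D · N(h)^(1/d). -/
theorem trace_le_of_totally_positive
    (K : Type*) [Field K] [NumberField K]
    (htr : Fintype.card (K →+* ℝ) = finrank ℚ K) :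
    ∃ D : ℝ, 0 < D ∧ ∀ h : K, (∀ ν : K →+* ℝ, 0 < ν h) →
      ∃ z : 𝓞 K, z ≠ 0 ∧
        (Algebra.trace ℚ K (h * (z : K) ^ 2) : ℝ) ≤
          D * (Algebra.norm ℚ h : ℝ) ^ ((1 : ℝ) / (finrank ℚ K : ℝ)) := by
  classical
  have hd1 : 0 < finrank ℚ K := finrank_pos
  set d : ℕ := finrank ℚ K with hdd
  -- the bijection between real and complex embeddings
  let e : (K →+* ℝ) → (K →+* ℂ) := fun ν => Complex.ofRealHom.comp ν
  have he_inj : Function.Injective e := by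
    intro ν ν' hvv
    ext x
    have := RingHom.congr_fun hvv x
    simpa [e] using this
  have he_bij : Function.Bijective e :=
    (Fintype.bijective_iff_injective_and_card e).2
      ⟨he_inj, by rw [htr, NumberField.Embeddings.card K ℂ]⟩
  -- every infinite place is real, and the bijection with real embeddings
  let m : (K →+* ℝ) → InfinitePlace K := fun ν => InfinitePlace.mk (e ν)
  have hm_apply : ∀ (ν : K →+* ℝ) (x : K), (m ν) x = |ν x| := by
    intro ν x
    simp [m, NumberField.InfinitePlace.apply, e]
  have he_real : ∀ ν : K →+* ℝ, ComplexEmbedding.IsReal (e ν) := by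
    intro ν
    rw [NumberField.ComplexEmbedding.isReal_iff]
    ext x
    simp [NumberField.ComplexEmbedding.conjugate_coe_eq, e]
  have hm_bij : Function.Bijective m := by
    constructor
    · intro ν ν' hvv
      apply he_inj
      rcases NumberField.InfinitePlace.mk_eq_iff.1 hvv with h1 | h1
      · exact h1
      · rw [← h1, NumberField.ComplexEmbedding.isReal_iff.1 (he_real ν)]
    · intro w
      obtain ⟨ν, hν⟩ := he_bij.2 w.embedding
      exact ⟨ν, by rw [show m ν = InfinitePlace.mk (e ν) from rfl, hν,
        NumberField.InfinitePlace.mk_embedding]⟩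
  have hw_real : ∀ w : InfinitePlace K, InfinitePlace.IsReal w := by
    intro w
    obtain ⟨ν, rfl⟩ := hm_bij.2 w
    exact ⟨e ν, he_real ν, rfl⟩
  -- trace and norm as sums/products over real embeddings
  have htrace : ∀ x : K, ((Algebra.trace ℚ K x : ℚ) : ℝ) = ∑ ν : K →+* ℝ, ν x := by
    intro x
    have h1 : algebraMap ℚ ℂ (Algebra.trace ℚ K x) = ∑ σ : K →ₐ[ℚ] ℂ, σ x :=
      trace_eq_sum_embeddings ℂ
    have h2 : ∑ σ : K →ₐ[ℚ] ℂ, σ x = ∑ φ : K →+* ℂ, φ x :=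
      (Fintype.sum_equiv (RingHom.equivRatAlgHom K ℂ) (fun φ => (RingHom.equivRatAlgHom K ℂ φ) x)
        (fun φ => φ x) (fun φ => rfl)).symm
    have h3 : ∑ φ : K →+* ℂ, φ x = ∑ ν : K →+* ℝ, ((ν x : ℝ) : ℂ) :=
      (Fintype.sum_bijective e he_bij _ _ (fun ν => rfl)).symm
    have : ((Algebra.trace ℚ K x : ℚ) : ℂ) = ((∑ ν : K →+* ℝ, ν x : ℝ) : ℂ) := by
      rw [show ((Algebra.trace ℚ K x : ℚ) : ℂ) = algebraMap ℚ ℂ (Algebra.trace ℚ K x) from rfl,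
        h1, h2, h3, Complex.ofReal_sum]
    exact_mod_cast this
  have hnorm : ∀ x : K, ((Algebra.norm ℚ x : ℚ) : ℝ) = ∏ ν : K →+* ℝ, ν x := by
    intro x
    have h1 : algebraMap ℚ ℂ (Algebra.norm ℚ x) = ∏ σ : K →ₐ[ℚ] ℂ, σ x :=
      Algebra.norm_eq_prod_embeddings ℚ ℂ x
    have h2 : ∏ σ : K →ₐ[ℚ] ℂ, σ x = ∏ φ : K →+* ℂ, φ x :=
      (Fintype.prod_equiv (RingHom.equivRatAlgHom K ℂ) (fun φ => (RingHom.equivRatAlgHom K ℂ φ) x)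
        (fun φ => φ x) (fun φ => rfl)).symm
    have h3 : ∏ φ : K →+* ℂ, φ x = ∏ ν : K →+* ℝ, ((ν x : ℝ) : ℂ) :=
      (Fintype.prod_bijective e he_bij _ _ (fun ν => rfl)).symm
    have : ((Algebra.norm ℚ x : ℚ) : ℂ) = ((∏ ν : K →+* ℝ, ν x : ℝ) : ℂ) := by
      rw [show ((Algebra.norm ℚ x : ℚ) : ℂ) = algebraMap ℚ ℂ (Algebra.norm ℚ x) from rfl,
        h1, h2, h3, Complex.ofReal_prod]
    exact_mod_cast this
  -- constants
  set C0 : ℝ≥0 := mixedEmbedding.convexBodyLTFactor K with hC0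
  have hC0pos : 0 < C0 := (mixedEmbedding.convexBodyLTFactor_ne_zero K).bot_lt
  set b : ℝ≥0 := (mixedEmbedding.minkowskiBound K 1).toNNReal with hb
  set c : ℝ≥0 := (b / C0 + 1) ^ ((2 : ℝ) / d) with hc
  have hbase : (0 : ℝ≥0) < b / C0 + 1 := by positivity
  have hcpos : 0 < c := NNReal.rpow_pos hbase
  refine ⟨(d : ℝ) * c, by positivity, ?_⟩
  intro h hpos
  -- positivity of the norm
  have hNpos : (0 : ℝ) < ((Algebra.norm ℚ h : ℚ) : ℝ) := by
    rw [hnorm h]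
    exact Finset.prod_pos fun ν _ => hpos ν
  set nN : ℝ≥0 := ⟨((Algebra.norm ℚ h : ℚ) : ℝ), hNpos.le⟩ with hnN
  have hnN_ne : nN ≠ 0 := by
    intro hcon
    have h0 : (nN : ℝ) = 0 := by rw [hcon, NNReal.coe_zero]
    exact hNpos.ne' h0
  set t : ℝ≥0 := c * nN ^ ((1 : ℝ) / d) with ht
  set f : InfinitePlace K → ℝ≥0 := fun w => NNReal.sqrt (t / Real.toNNReal (w h)) with hf
  have hfm : ∀ ν : K →+* ℝ, f (m ν) = NNReal.sqrt (t / Real.toNNReal (ν h)) := by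
    intro ν
    rw [hf]
    simp only []
    rw [hm_apply ν h, abs_of_pos (hpos ν)]
  -- the volume computation
  have hmult : ∀ w : InfinitePlace K, InfinitePlace.mult w = 1 := by
    intro w
    simp [NumberField.InfinitePlace.mult, hw_real w]
  have hprod : ∏ w : InfinitePlace K, f w ^ InfinitePlace.mult w = b / C0 + 1 := by
    have h1 : ∏ w : InfinitePlace K, f w ^ InfinitePlace.mult w
        = ∏ ν : K →+* ℝ, NNReal.sqrt (t / Real.toNNReal (ν h)) := by
      rw [← Fintype.prod_bijective m hm_bij _ _ (fun ν => rfl)]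
      exact Finset.prod_congr rfl fun ν _ => by rw [hmult, pow_one, hfm]
    have h2 : ∏ ν : K →+* ℝ, Real.toNNReal (ν h) = nN := by
      apply NNReal.coe_injective
      push_cast
      rw [Finset.prod_congr rfl fun ν _ => Real.coe_toNNReal (ν h) (hpos ν).le]
      rw [hnN]
      exact (hnorm h).symm
    have h3 : ∏ ν : K →+* ℝ, (t / Real.toNNReal (ν h)) = c ^ d := by
      rw [Finset.prod_div_distrib, h2, Finset.prod_const, Finset.card_univ,
        htr, ht, mul_pow, ← NNReal.rpow_natCast (nN ^ ((1:ℝ)/d)) d, ← NNReal.rpow_mul]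
      rw [one_div_mul_cancel (by exact_mod_cast hd1.ne' : (d : ℝ) ≠ 0), NNReal.rpow_one]
      exact mul_div_cancel_right₀ _ hnN_ne
    have h4 : ∏ ν : K →+* ℝ, NNReal.sqrt (t / Real.toNNReal (ν h))
        = NNReal.sqrt (c ^ d) := by
      rw [← h3]
      exact (map_prod NNReal.sqrtHom _ _).symm
    have h5 : c ^ d = (b / C0 + 1) ^ 2 := by
      rw [hc, ← NNReal.rpow_natCast (_ ^ ((2:ℝ)/d)) d, ← NNReal.rpow_mul,
        div_mul_cancel₀ (2:ℝ) (by exact_mod_cast hd1.ne' : (d : ℝ) ≠ 0)]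
      exact_mod_cast NNReal.rpow_natCast _ 2
    rw [h1, h4, h5, NNReal.sqrt_eq_iff_eq_sq]
  have hvol : mixedEmbedding.minkowskiBound K ↑1
      < MeasureTheory.volume (mixedEmbedding.convexBodyLT K f) := by
    rw [mixedEmbedding.convexBodyLT_volume, hprod]
    have hBne : mixedEmbedding.minkowskiBound K 1 ≠ ⊤ :=
      (mixedEmbedding.minkowskiBound_lt_top K 1).ne
    rw [← ENNReal.coe_toNNReal hBne, ← hb, ← hC0, ← ENNReal.coe_mul, ENNReal.coe_lt_coe]
    calc b = C0 * (b / C0) := (mul_div_cancel₀ _ hC0pos.ne').symm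
    _ < C0 * (b / C0 + 1) := by
        exact mul_lt_mul_of_pos_left (lt_add_of_pos_right _ one_pos) hC0pos
  obtain ⟨z, hz_ne, hz⟩ := mixedEmbedding.exists_ne_zero_mem_ringOfIntegers_lt K hvol
  refine ⟨z, hz_ne, ?_⟩
  -- the trace bound
  have hterm : ∀ ν : K →+* ℝ, ν (h * (z : K) ^ 2) ≤ (t : ℝ) := by
    intro ν
    have h1 : (m ν) (z : K) < f (m ν) := hz (m ν)
    rw [hm_apply] at h1
    have h2 : (ν (z : K)) ^ 2 ≤ ((f (m ν) : ℝ)) ^ 2 := by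
      rw [← sq_abs]
      exact pow_le_pow_left₀ (abs_nonneg _) h1.le 2
    have h3 : ((f (m ν) : ℝ)) ^ 2 = (t : ℝ) / ν h := by
      rw [hfm, ← NNReal.coe_pow, NNReal.sq_sqrt, NNReal.coe_div,
        Real.coe_toNNReal (ν h) (hpos ν).le]
    rw [map_mul, map_pow]
    calc ν h * ν (z : K) ^ 2 ≤ ν h * ((t : ℝ) / ν h) := by
          rw [← h3]
          exact mul_le_mul_of_nonneg_left h2 (hpos ν).le
    _ = (t : ℝ) := mul_div_cancel₀ _ (hpos ν).ne'
  have hsum : ((Algebra.trace ℚ K (h * (z : K) ^ 2) : ℚ) : ℝ) ≤ (d : ℝ) * t := by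
    rw [htrace]
    calc ∑ ν : K →+* ℝ, ν (h * (z : K) ^ 2) ≤ ∑ _ν : K →+* ℝ, (t : ℝ) :=
          Finset.sum_le_sum fun ν _ => hterm ν
    _ = (d : ℝ) * t := by rw [Finset.sum_const, Finset.card_univ, htr, nsmul_eq_mul]
  refine hsum.trans_eq ?_
  rw [mul_assoc]
  congr 1
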